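/- (Analytic form of Theorem 3.3.) Let Φ be a branching mechanism whose Lévy measure π has unbounded support, i.e. π((r,∞)) > 0 for every r > 0. For r > 0 let u^r_t(λ) denote the unique locally bounded nonnegative solution of u_t = λt − ∫₀ᵗ Φ^{(r,∞)}(u_s) ds. Then for every t ∈ (0,∞) and every x > 0, lim_{r→∞} (1 − exp(−x · u^r_t(π((r,∞))))) / π((r,∞)) = x(1 − e^{−αt})/α, where (1 − e^{−αt})/α is interpreted as t when α = 0. Equivalently, lim_{r→∞} u^r_t(π((r,∞)))/π((r,∞)) = (1 − e^{−αt})/α. -/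

import Mathlib

open MeasureTheory Filter Set
open scoped Topology

/-- The branching mechanism `Φ(λ) = αλ + βλ² + ∫_{(0,∞)} (e^{-λθ} - 1 + λθ) π(dθ)`. -/
noncomputable def Phi (α β : ℝ) (π : Measure ℝ) (lam : ℝ) : ℝ :=
  α * lam + β * lam ^ 2 + ∫ θ, (Real.exp (-lam * θ) - 1 + lam * θ) ∂π

/-- The `(r,∞)`-truncated branching mechanism
`Φ^{(r,∞)}(λ) = Φ(λ) + ∫_{(r,∞)} (1 - e^{-λθ}) π(dθ)`. -/
noncomputable def PhiIoi (α β : ℝ) (π : Measure ℝ) (r lam : ℝ) : ℝ :=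
  Phi α β π lam + ∫ θ in Set.Ioi r, (1 - Real.exp (-lam * θ)) ∂π

/-- `u` is a locally bounded nonnegative solution of `u_t = λt - ∫₀ᵗ Φ(u_s) ds`. -/
def IsMassSolution (Φ : ℝ → ℝ) (lam : ℝ) (u : ℝ → ℝ) : Prop :=
  (∀ t, 0 ≤ t → 0 ≤ u t) ∧
  (∀ T, 0 < T → BddAbove (u '' Set.Icc 0 T)) ∧
  (∀ t, 0 ≤ t → u t = lam * t - ∫ s in (0:ℝ)..t, Φ (u s))

lemma expIneq1 (x : ℝ) : 0 ≤ Real.exp (-x) - 1 + x := by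
  have := Real.add_one_le_exp (-x); linarith

lemma expIneq3 {x : ℝ} (hx : 0 ≤ x) : Real.exp (-x) - 1 + x ≤ x := by
  have : Real.exp (-x) ≤ 1 := Real.exp_le_one_iff.mpr (by linarith)
  linarith

lemma oneSubExp_nonneg {x : ℝ} (hx : 0 ≤ x) : 0 ≤ 1 - Real.exp (-x) := by
  have : Real.exp (-x) ≤ 1 := Real.exp_le_one_iff.mpr (by linarith)
  linarith

lemma oneSubExp_le {x : ℝ} : 1 - Real.exp (-x) ≤ x := by
  have := Real.add_one_le_exp (-x); linarith

lemma expQuad {x : ℝ} (hx : 0 ≤ x) : Real.exp (-x) - 1 + x ≤ x ^ 2 / 2 := by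
  have hderiv : ∀ t ∈ Set.uIcc (0:ℝ) x, HasDerivAt (fun t => t + Real.exp (-t)) (1 - Real.exp (-t)) t := by
    intro t _
    have h1 : HasDerivAt (fun t : ℝ => -t) (-1) t := (hasDerivAt_id t).neg
    have h2 : HasDerivAt (fun t : ℝ => Real.exp (-t)) (Real.exp (-t) * (-1)) t :=
      (Real.hasDerivAt_exp (-t)).comp t h1
    have := (hasDerivAt_id t).fun_add h2
    simpa using this.congr_deriv (by ring)
  have hint : IntervalIntegrable (fun t => 1 - Real.exp (-t)) volume 0 x :=
    (continuous_const.sub (Real.continuous_exp.comp continuous_neg)).intervalIntegrable 0 x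
  have hFTC := intervalIntegral.integral_eq_sub_of_hasDerivAt hderiv hint
  have hmono : (∫ t in (0:ℝ)..x, (1 - Real.exp (-t))) ≤ ∫ t in (0:ℝ)..x, t := by
    apply intervalIntegral.integral_mono_on hx hint (continuous_id.intervalIntegrable 0 x)
    intro t ht
    simpa using oneSubExp_le (x := t)
  rw [hFTC] at hmono
  simp only [integral_id] at hmono
  simp at hmono ⊢
  nlinarith [hmono]

lemma expMono {a b θ : ℝ} (ha : 0 ≤ a) (hab : a ≤ b) (hθ : 0 ≤ θ) :
    Real.exp (-(a*θ)) - 1 + a*θ ≤ Real.exp (-(b*θ)) - 1 + b*θ := by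
  have h1 : Real.exp (-(a*θ)) ≤ 1 := Real.exp_le_one_iff.mpr (by nlinarith)
  have h2 : 1 - Real.exp (-((b-a)*θ)) ≤ (b-a)*θ := oneSubExp_le
  have h4 : 0 ≤ 1 - Real.exp (-((b-a)*θ)) := oneSubExp_nonneg (by nlinarith)
  have h3 : Real.exp (-(a*θ)) * Real.exp (-((b-a)*θ)) = Real.exp (-(b*θ)) := by
    rw [← Real.exp_add]; ring_nf
  nlinarith [Real.exp_pos (-(a*θ))]

lemma domJ {lam θ : ℝ} (hl : 0 ≤ lam) (hθ : 0 < θ) :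
    |Real.exp (-lam * θ) - 1 + lam * θ| ≤ (lam + lam ^ 2) * min θ (θ ^ 2) := by
  rw [neg_mul, abs_of_nonneg (expIneq1 (lam * θ))]
  rcases le_or_gt θ 1 with h | h
  · rw [min_eq_right (by nlinarith)]
    have := expQuad (mul_nonneg hl hθ.le)
    nlinarith
  · rw [min_eq_left (by nlinarith)]
    have := expIneq3 (mul_nonneg hl hθ.le)
    nlinarith

lemma domJdiv {lam θ : ℝ} (h0 : 0 < lam) (h1 : lam ≤ 1) (hθ : 0 < θ) :
    (Real.exp (-lam * θ) - 1 + lam * θ) / lam ≤ min θ (θ ^ 2) := by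
  rw [neg_mul]
  apply le_min
  · rw [div_le_iff₀ h0]
    have := expIneq3 (mul_nonneg h0.le hθ.le); nlinarith
  · rw [div_le_iff₀ h0]
    have := expQuad (mul_nonneg h0.le hθ.le); nlinarith

section meas
variable {π : Measure ℝ}

lemma ae_pos (hsupp : π (Set.Iic 0) = 0) : ∀ᵐ θ ∂π, 0 < θ := by
  rw [ae_iff]
  convert hsupp using 2
  ext θ; simp [not_lt]

lemma integrable_J (hsupp : π (Set.Iic 0) = 0)
    (hint : Integrable (fun θ => min θ (θ ^ 2)) π) {lam : ℝ} (hl : 0 ≤ lam) :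
    Integrable (fun θ => Real.exp (-lam * θ) - 1 + lam * θ) π := by
  refine Integrable.mono' (hint.const_mul (lam + lam ^ 2)) (Continuous.aestronglyMeasurable (by fun_prop)) ?_
  filter_upwards [ae_pos hsupp] with θ hθ
  exact domJ hl hθ

lemma Jint_nonneg (lam : ℝ) : 0 ≤ ∫ θ, (Real.exp (-lam * θ) - 1 + lam * θ) ∂π := by
  apply integral_nonneg
  intro θ
  simpa [neg_mul] using expIneq1 (lam * θ)

lemma Jint_mono (hsupp : π (Set.Iic 0) = 0)
    (hint : Integrable (fun θ => min θ (θ ^ 2)) π) {a b : ℝ} (ha : 0 ≤ a) (hab : a ≤ b) :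
    (∫ θ, (Real.exp (-a * θ) - 1 + a * θ) ∂π) ≤ ∫ θ, (Real.exp (-b * θ) - 1 + b * θ) ∂π := by
  apply integral_mono_ae (integrable_J hsupp hint ha) (integrable_J hsupp hint (le_trans ha hab))
  filter_upwards [ae_pos hsupp] with θ hθ
  simpa only [neg_mul] using expMono ha hab hθ.le

lemma tail_lt_top (hint : Integrable (fun θ => min θ (θ ^ 2)) π) {r : ℝ} (hr : 0 < r) :
    π (Set.Ioi r) < ⊤ := by
  refine lt_of_le_of_lt (measure_mono ?_) (hint.measure_ge_lt_top (ε := min r (r^2)) (by positivity))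
  intro θ (hθ : r < θ)
  exact le_min (le_trans (min_le_left _ _) hθ.le)
    (le_trans (min_le_right _ _) (by nlinarith))

lemma integrableOn_id_tail (hsupp : π (Set.Iic 0) = 0)
    (hint : Integrable (fun θ => min θ (θ ^ 2)) π) {r : ℝ} (hr : 0 < r) :
    IntegrableOn (fun θ => θ) (Set.Ioi r) π := by
  refine Integrable.mono' ((hint.restrict (s := Set.Ioi r)).const_mul (max 1 r⁻¹))
    aestronglyMeasurable_id ?_
  rw [ae_restrict_iff' measurableSet_Ioi]
  refine Eventually.of_forall fun θ (hθ : r < θ) => ?_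
  have hθ0 : 0 < θ := lt_trans hr hθ
  rw [Real.norm_eq_abs, abs_of_nonneg hθ0.le]
  rcases le_or_gt 1 θ with h | h
  · rw [min_eq_left (by nlinarith)]
    nlinarith [le_max_left (1:ℝ) r⁻¹]
  · rw [min_eq_right (by nlinarith)]
    have h2 : θ ≤ r⁻¹ * θ ^ 2 := by
      rw [inv_mul_eq_div, le_div_iff₀ hr]; nlinarith
    nlinarith [le_max_right (1:ℝ) r⁻¹, sq_nonneg θ]

lemma tail_nonneg {r : ℝ} (hr : 0 < r) : 0 ≤ ∫ θ in Set.Ioi r, θ ∂π :=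
  setIntegral_nonneg measurableSet_Ioi fun θ hθ => le_of_lt (lt_trans hr hθ)

lemma tail_tendsto (hsupp : π (Set.Iic 0) = 0)
    (hint : Integrable (fun θ => min θ (θ ^ 2)) π) :
    Tendsto (fun r => ∫ θ in Set.Ioi r, θ ∂π) atTop (𝓝 0) := by
  have key : ∀ r : ℝ, ∫ θ in Set.Ioi r, θ ∂π = ∫ θ, (Set.Ioi r).indicator (fun x => x) θ ∂π :=
    fun r => (integral_indicator measurableSet_Ioi).symm
  simp only [key]
  have h0 : (0:ℝ) = ∫ _θ, (0:ℝ) ∂π := by simp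
  rw [h0]
  apply tendsto_integral_filter_of_dominated_convergence (fun θ => min θ (θ ^ 2))
  · exact Eventually.of_forall fun r => aestronglyMeasurable_id.indicator measurableSet_Ioi
  · filter_upwards [eventually_ge_atTop (1:ℝ)] with r hr
    filter_upwards [ae_pos hsupp] with θ hθ
    by_cases h : θ ∈ Set.Ioi r
    · rw [indicator_of_mem h]
      have h1 : (1:ℝ) ≤ θ := le_trans hr (le_of_lt h)
      rw [Real.norm_eq_abs, abs_of_nonneg hθ.le, min_eq_left (by nlinarith)]
    · rw [indicator_of_notMem h]
      simp only [norm_zero]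
      positivity
  · exact hint
  · refine Eventually.of_forall fun θ => ?_
    apply Tendsto.congr' _ tendsto_const_nhds
    filter_upwards [eventually_gt_atTop θ] with r hr
    rw [indicator_of_notMem (by simpa using hr.le)]

lemma eps_tendsto (hsupp : π (Set.Iic 0) = 0)
    (hint : Integrable (fun θ => min θ (θ ^ 2)) π) :
    Tendsto (fun r => (π (Set.Ioi r)).toReal) atTop (𝓝 0) := by
  apply squeeze_zero' (Eventually.of_forall fun r => ENNReal.toReal_nonneg) _
    (tail_tendsto hsupp hint)
  filter_upwards [eventually_ge_atTop (1:ℝ)] with r hr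
  have hr0 : (0:ℝ) < r := lt_of_lt_of_le one_pos hr
  have hfin : π (Set.Ioi r) < ⊤ := tail_lt_top hint hr0
  have h1 : (π (Set.Ioi r)).toReal = ∫ _θ in Set.Ioi r, (1:ℝ) ∂π := by
    rw [setIntegral_const]; simp; rfl
  rw [h1]
  apply setIntegral_mono_on (integrableOn_const hfin.ne)
    (integrableOn_id_tail hsupp hint hr0) measurableSet_Ioi
  intro θ hθ; exact le_trans hr (le_of_lt hθ)

lemma Jdiv_tendsto (hsupp : π (Set.Iic 0) = 0)
    (hint : Integrable (fun θ => min θ (θ ^ 2)) π) :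
    Tendsto (fun lam => (∫ θ, (Real.exp (-lam * θ) - 1 + lam * θ) ∂π) / lam)
      (𝓝[>] (0:ℝ)) (𝓝 0) := by
  have key : ∀ lam : ℝ, (∫ θ, (Real.exp (-lam * θ) - 1 + lam * θ) ∂π) / lam
      = ∫ θ, (Real.exp (-lam * θ) - 1 + lam * θ) / lam ∂π := fun lam => (integral_div _ _).symm
  simp only [key]
  have main := tendsto_integral_filter_of_dominated_convergence (μ := π) (l := 𝓝[>] (0:ℝ))
      (F := fun lam θ => (Real.exp (-lam * θ) - 1 + lam * θ) / lam) (f := fun _ => 0)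
      (fun θ => min θ (θ ^ 2)) ?_ ?_ ?_ ?_
  · simpa using main
  · exact Eventually.of_forall fun lam => Continuous.aestronglyMeasurable (by fun_prop)
  · have hmem : Set.Ioc (0:ℝ) 1 ∈ 𝓝[>] (0:ℝ) := Ioc_mem_nhdsGT_of_mem ⟨le_refl 0, one_pos⟩
    filter_upwards [hmem] with lam hlam
    filter_upwards [ae_pos hsupp] with θ hθ
    rw [Real.norm_eq_abs, abs_of_nonneg
      (div_nonneg (by rw [neg_mul]; exact expIneq1 _) hlam.1.le)]
    exact domJdiv hlam.1 hlam.2 hθ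
  · exact hint
  · filter_upwards [ae_pos hsupp] with θ hθ
    apply squeeze_zero'
    · filter_upwards [self_mem_nhdsWithin] with lam (hlam : 0 < lam)
      exact div_nonneg (by rw [neg_mul]; exact expIneq1 _) hlam.le
    · filter_upwards [self_mem_nhdsWithin] with lam (hlam : 0 < lam)
      show _ ≤ lam * (θ ^ 2 / 2)
      rw [div_le_iff₀ hlam]
      have := expQuad (mul_nonneg hlam.le hθ.le)
      rw [neg_mul]
      nlinarith
    · have : Tendsto (fun lam : ℝ => lam * (θ ^ 2 / 2)) (𝓝 0) (𝓝 (0 * (θ ^ 2 / 2))) :=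
        (continuous_id.mul continuous_const).tendsto 0
      simpa using this.mono_left nhdsWithin_le_nhds

end meas

lemma phiIoi_contOn (α β : ℝ) {π : Measure ℝ} (hsupp : π (Set.Iic 0) = 0)
    (hint : Integrable (fun θ => min θ (θ ^ 2)) π) {r : ℝ} (hr : 0 < r)
    (hfin : π (Set.Ioi r) ≠ ⊤) :
    ContinuousOn (PhiIoi α β π r) (Set.Ici 0) := by
  have h1 : ContinuousOn (fun lam : ℝ => α * lam + β * lam ^ 2) (Set.Ici 0) :=
    Continuous.continuousOn (by fun_prop)
  have hJ : ContinuousOn (fun lam => ∫ θ, (Real.exp (-lam * θ) - 1 + lam * θ) ∂π)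
      (Set.Ici 0) := by
    intro l0 hl0
    apply continuousWithinAt_of_dominated
      (bound := fun θ => ((l0 + 1) + (l0 + 1) ^ 2) * min θ (θ ^ 2))
    · exact Eventually.of_forall fun lam => Continuous.aestronglyMeasurable (by fun_prop)
    · have hmem : Set.Iio (l0 + 1) ∈ 𝓝[Set.Ici 0] l0 :=
        nhdsWithin_le_nhds (Iio_mem_nhds (lt_add_one l0))
      filter_upwards [hmem, self_mem_nhdsWithin] with lam hlt (hlam : (0:ℝ) ≤ lam)
      filter_upwards [ae_pos hsupp] with θ hθ
      refine le_trans (domJ hlam hθ) (mul_le_mul_of_nonneg_right ?_ (by positivity))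
      have : lam ≤ l0 + 1 := le_of_lt hlt
      nlinarith
    · exact hint.const_mul _
    · exact Eventually.of_forall fun θ => Continuous.continuousWithinAt (by fun_prop)
  have hK : ContinuousOn (fun lam => ∫ θ in Set.Ioi r, (1 - Real.exp (-lam * θ)) ∂π)
      (Set.Ici 0) := by
    intro l0 hl0
    apply continuousWithinAt_of_dominated (bound := fun _θ => (1:ℝ))
    · exact Eventually.of_forall fun lam => Continuous.aestronglyMeasurable (by fun_prop)
    · filter_upwards [self_mem_nhdsWithin] with lam (hlam : (0:ℝ) ≤ lam)
      rw [ae_restrict_iff' measurableSet_Ioi]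
      refine Eventually.of_forall fun θ (hθ : r < θ) => ?_
      have hx : 0 ≤ lam * θ := mul_nonneg hlam (le_trans hr.le hθ.le)
      rw [Real.norm_eq_abs, neg_mul, abs_of_nonneg (oneSubExp_nonneg hx)]
      have := Real.exp_pos (-(lam * θ))
      linarith
    · exact integrableOn_const hfin
    · exact Eventually.of_forall fun θ => Continuous.continuousWithinAt (by fun_prop)
  unfold PhiIoi Phi
  exact (h1.add hJ).add hK

lemma sol_cont {Φr : ℝ → ℝ} {ε : ℝ} {u : ℝ → ℝ}
    (heq : ∀ t, 0 ≤ t → u t = ε * t - ∫ s in (0:ℝ)..t, Φr (u s))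
    {T : ℝ} (hT : 0 ≤ T)
    (hgint : IntervalIntegrable (fun s => Φr (u s)) volume 0 T) :
    ContinuousOn u (Set.Icc 0 T) := by
  have hprim : ContinuousOn (fun x => ∫ τ in (0:ℝ)..x, Φr (u τ)) (Set.Icc 0 T) := by
    have := intervalIntegral.continuousOn_primitive_interval' hgint left_mem_uIcc
    rwa [uIcc_of_le hT] at this
  apply ContinuousOn.congr (((continuous_const.mul continuous_id).continuousOn).sub hprim)
  intro y hy
  exact heq y hy.1

lemma sol_integrable (α β : ℝ) {π : Measure ℝ} {r : ℝ}
    (hΦcont : ContinuousOn (PhiIoi α β π r) (Set.Ici 0))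
    {ε : ℝ} (hε : 0 < ε) {u : ℝ → ℝ} (hu : IsMassSolution (PhiIoi α β π r) ε u)
    {T : ℝ} (hT : 0 < T) :
    IntervalIntegrable (fun s => PhiIoi α β π r (u s)) volume 0 T := by
  obtain ⟨hpos, hbdd, heq⟩ := hu
  set Φr := PhiIoi α β π r with hΦr
  set g : ℝ → ℝ := fun s => Φr (u s) with hgdef
  obtain ⟨M, hM⟩ := hbdd T hT
  set A := {s : ℝ | s ∈ Set.Icc 0 T ∧ IntervalIntegrable g volume 0 s} with hA
  have h0A : (0:ℝ) ∈ A := ⟨⟨le_refl 0, hT.le⟩, IntervalIntegrable.refl⟩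
  have hAne : A.Nonempty := ⟨0, h0A⟩
  have hAbdd : BddAbove A := ⟨T, fun s hs => hs.1.2⟩
  set c := sSup A with hc
  have hc0 : 0 ≤ c := le_csSup hAbdd h0A
  have hcT : c ≤ T := csSup_le hAne fun s hs => hs.1.2
  have hdown : ∀ s s', 0 ≤ s → s ≤ s' → s' ∈ A → s ∈ A := by
    rintro s s' h0 hss' ⟨hmem, hint'⟩
    refine ⟨⟨h0, le_trans hss' hmem.2⟩, hint'.mono_set ?_⟩
    rw [uIcc_of_le h0, uIcc_of_le (le_trans h0 hss')]
    exact Icc_subset_Icc_right hss'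
  have hout : ∀ s, s ∈ Set.Icc 0 T → s ∉ A → u s = ε * s := by
    intro s hs hns
    have hni : ¬ IntervalIntegrable g volume 0 s := fun h => hns ⟨hs, h⟩
    rw [heq s hs.1, intervalIntegral.integral_undef hni, sub_zero]
  have hlin : ∀ a b : ℝ, 0 ≤ a → ContinuousOn (fun s => Φr (ε * s)) (Set.Icc a b) := by
    intro a b ha
    apply hΦcont.comp (continuous_const.mul continuous_id).continuousOn
    intro s hs
    exact mul_nonneg hε.le (le_trans ha hs.1)
  rcases Classical.em (c ∈ A) with hcA | hcA
  · have h1 : IntegrableOn g (Set.Ioc 0 c) volume :=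
      (intervalIntegrable_iff_integrableOn_Ioc_of_le hc0).1 hcA.2
    have h2 : IntegrableOn g (Set.Ioc c T) volume := by
      refine IntegrableOn.congr_fun
        (((hlin c T hc0).integrableOn_Icc).mono_set Ioc_subset_Icc_self) ?_ measurableSet_Ioc
      intro s hs
      have hns : s ∉ A := fun hsA => absurd (le_csSup hAbdd hsA) (not_le.2 hs.1)
      rw [hgdef]
      simp only
      rw [hout s ⟨le_trans hc0 hs.1.le, hs.2⟩ hns]
    rw [intervalIntegrable_iff_integrableOn_Ioc_of_le hT.le]
    have := h1.union h2
    rwa [Set.Ioc_union_Ioc_eq_Ioc hc0 hcT] at this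
  · have hnsIcc : ∀ s ∈ Set.Icc c T, s ∉ A := fun s hs hsA => hcA (hdown c s hc0 hs.1 hsA)
    have h2 : IntegrableOn g (Set.Icc c T) volume := by
      refine IntegrableOn.congr_fun ((hlin c T hc0).integrableOn_Icc) ?_ measurableSet_Icc
      intro s hs
      rw [hgdef]
      simp only
      rw [hout s ⟨le_trans hc0 hs.1, hs.2⟩ (hnsIcc s hs)]
    have hucont : ContinuousOn u (Set.Ico 0 c) := by
      intro s hs
      obtain ⟨s', hs'A, hss'⟩ := exists_lt_of_lt_csSup hAne hs.2
      have hcont' : ContinuousOn u (Set.Icc 0 s') := sol_cont heq hs'A.1.1 hs'A.2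
      refine (hcont' s ⟨hs.1, hss'.le⟩).mono_of_mem_nhdsWithin ?_
      apply mem_nhdsWithin.2 ⟨Set.Iio s', isOpen_Iio, hss', ?_⟩
      rintro y ⟨hy1, hy2⟩
      exact ⟨hy2.1, le_of_lt hy1⟩
    have h3 : IntegrableOn g (Set.Ico 0 c) volume := by
      have hgc : ContinuousOn g (Set.Ico 0 c) := by
        apply hΦcont.comp hucont
        intro s hs
        exact hpos s hs.1
      obtain ⟨K, hK⟩ := (isCompact_Icc (a := (0:ℝ)) (b := M)).exists_bound_of_continuousOn
        (hΦcont.mono (fun x hx => hx.1))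
      have hKint : IntegrableOn (fun _ : ℝ => K) (Set.Ico 0 c) volume :=
        integrableOn_const measure_Ico_lt_top.ne
      refine hKint.mono' (hgc.aestronglyMeasurable measurableSet_Ico) ?_
      rw [ae_restrict_iff' measurableSet_Ico]
      refine Eventually.of_forall fun s hs => ?_
      exact hK (u s) ⟨hpos s hs.1, hM (Set.mem_image_of_mem u ⟨hs.1, le_trans hs.2.le hcT⟩)⟩
    rw [intervalIntegrable_iff_integrableOn_Ioc_of_le hT.le]
    have := h3.union h2
    rw [Set.Ico_union_Icc_eq_Icc hc0 hcT] at this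
    exact this.mono_set Ioc_subset_Icc_self

lemma core_estimate (α β : ℝ) (hβ : 0 ≤ β) {π : Measure ℝ}
    (hsupp : π (Set.Iic 0) = 0) (hint : Integrable (fun θ => min θ (θ ^ 2)) π)
    {r : ℝ} (hr : 0 < r) (hfin : π (Set.Ioi r) ≠ ⊤)
    {ε : ℝ} (hε : 0 < ε) {u : ℝ → ℝ} (hu : IsMassSolution (PhiIoi α β π r) ε u)
    {t : ℝ} (ht : 0 < t) :
    u t ≤ ε * (t * Real.exp ((|α| + 1) * t)) ∧
    |u t - ε * ∫ s in (0:ℝ)..t, Real.exp (-α * s)| ≤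
      (β * (ε * (t * Real.exp ((|α| + 1) * t))) ^ 2
        + (∫ θ, (Real.exp (-(ε * (t * Real.exp ((|α| + 1) * t))) * θ) - 1
            + (ε * (t * Real.exp ((|α| + 1) * t))) * θ) ∂π)
        + (ε * (t * Real.exp ((|α| + 1) * t))) * ∫ θ in Set.Ioi r, θ ∂π)
        * Real.exp ((|α| + 1) * t) := by
  have hΦcont : ContinuousOn (PhiIoi α β π r) (Set.Ici 0) :=
    phiIoi_contOn α β hsupp hint hr hfin
  have hgint : IntervalIntegrable (fun s => PhiIoi α β π r (u s)) volume 0 t :=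
    sol_integrable α β hΦcont hε hu ht
  obtain ⟨hpos, hbdd, heq⟩ := hu
  set K : ℝ := |α| + 1 with hKdef
  have hK1 : 1 ≤ K := le_add_of_nonneg_left (abs_nonneg α)
  have hK0 : 0 < K := lt_of_lt_of_le one_pos hK1
  have hKabs : |α| ≤ K := by simp [hKdef]
  set g : ℝ → ℝ := fun s => PhiIoi α β π r (u s) with hgdef
  have hucont : ContinuousOn u (Set.Icc 0 t) := sol_cont heq ht.le hgint
  have humem : ∀ s ∈ Set.Icc 0 t, u s ∈ Set.Ici (0:ℝ) := fun s hs => hpos s hs.1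
  have hgcont : ContinuousOn g (Set.Icc 0 t) := hΦcont.comp hucont humem
  set h : ℝ → ℝ := fun s => g s - α * u s with hhdef
  have hhcont : ContinuousOn h (Set.Icc 0 t) :=
    hgcont.sub (continuousOn_const.mul hucont)
  have hR_nonneg : ∀ lam : ℝ, 0 ≤ lam → 0 ≤ PhiIoi α β π r lam - α * lam := by
    intro lam hlam
    have h1 : (0:ℝ) ≤ β * lam ^ 2 := by positivity
    have h2 := Jint_nonneg (π := π) lam
    have h3 : 0 ≤ ∫ θ in Set.Ioi r, (1 - Real.exp (-lam * θ)) ∂π := by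
      apply setIntegral_nonneg measurableSet_Ioi
      intro θ hθ
      rw [neg_mul]
      exact oneSubExp_nonneg (mul_nonneg hlam (le_trans hr.le (le_of_lt hθ)))
    unfold PhiIoi Phi
    linarith
  have hh_nonneg : ∀ s ∈ Set.Icc 0 t, 0 ≤ h s := fun s hs => hR_nonneg (u s) (hpos s hs.1)
  -- interval integrability of the pieces on [0,s] for s ≤ t
  have hui : ∀ s ∈ Set.Icc 0 t, IntervalIntegrable u volume 0 s := by
    intro s hs
    exact ContinuousOn.intervalIntegrable (by rw [uIcc_of_le hs.1]; exact hucont.mono (Icc_subset_Icc_right hs.2))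
  have hgi : ∀ s ∈ Set.Icc 0 t, IntervalIntegrable g volume 0 s := by
    intro s hs
    exact ContinuousOn.intervalIntegrable (by rw [uIcc_of_le hs.1]; exact hgcont.mono (Icc_subset_Icc_right hs.2))
  have hhi : ∀ s ∈ Set.Icc 0 t, IntervalIntegrable h volume 0 s := by
    intro s hs
    exact ContinuousOn.intervalIntegrable (by rw [uIcc_of_le hs.1]; exact hhcont.mono (Icc_subset_Icc_right hs.2))
  set U : ℝ → ℝ := fun s => ∫ τ in (0:ℝ)..s, u τ with hUdef
  set H : ℝ → ℝ := fun s => ∫ τ in (0:ℝ)..s, h τ with hHdef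
  have heq2 : ∀ s ∈ Set.Icc 0 t, u s = ε * s - α * U s - H s := by
    intro s hs
    have hsplit : (∫ τ in (0:ℝ)..s, g τ) = α * U s + H s := by
      have : (∫ τ in (0:ℝ)..s, g τ) = ∫ τ in (0:ℝ)..s, (α * u τ + h τ) := by
        apply intervalIntegral.integral_congr
        intro τ _
        simp [hhdef]
      rw [this, intervalIntegral.integral_add (((hui s hs).const_mul α)) (hhi s hs),
        intervalIntegral.integral_const_mul]
    have := heq s hs.1
    rw [hsplit] at this
    linarith
  have hUnonneg : ∀ s ∈ Set.Icc 0 t, 0 ≤ U s := by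
    intro s hs
    exact intervalIntegral.integral_nonneg hs.1 fun τ hτ => hpos τ hτ.1
  have hHnonneg : ∀ s ∈ Set.Icc 0 t, 0 ≤ H s := by
    intro s hs
    exact intervalIntegral.integral_nonneg hs.1 fun τ hτ =>
      hh_nonneg τ ⟨hτ.1, le_trans hτ.2 hs.2⟩
  have hub : ∀ s ∈ Set.Icc 0 t, u s ≤ K * U s + ε * t := by
    intro s hs
    have e1 := heq2 s hs
    have e2 : ε * s ≤ ε * t := by nlinarith [hs.2, hε.le]
    have e3 : -(α * U s) ≤ K * U s := by
      have := mul_le_mul_of_nonneg_right (neg_le_abs α) (hUnonneg s hs)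
      have h4 := mul_le_mul_of_nonneg_right hKabs (hUnonneg s hs)
      nlinarith
    have e4 := hHnonneg s hs
    linarith
  -- FTC helpers
  have hmemIcc : ∀ s ∈ Set.Ico 0 t, Set.Icc 0 t ∈ 𝓝[Set.Ici s] s := by
    intro s hs
    apply mem_nhdsWithin.2 ⟨Set.Iio t, isOpen_Iio, hs.2, ?_⟩
    rintro y ⟨hy1, hy2⟩
    exact ⟨le_trans hs.1 hy2, le_of_lt hy1⟩
  have hFTC : ∀ (f : ℝ → ℝ), ContinuousOn f (Set.Icc 0 t) →
      (∀ s ∈ Set.Icc 0 t, IntervalIntegrable f volume 0 s) →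
      ∀ s ∈ Set.Ico 0 t,
        HasDerivWithinAt (fun x => ∫ τ in (0:ℝ)..x, f τ) (f s) (Set.Ici s) s := by
    intro f hf hfi s hs
    apply intervalIntegral.integral_hasDerivWithinAt_right (hfi s ⟨hs.1, hs.2.le⟩)
    · exact ⟨Set.Icc s t, Icc_mem_nhdsGT_of_mem ⟨le_refl s, hs.2⟩,
        (hf.mono (Icc_subset_Icc_left hs.1)).aestronglyMeasurable measurableSet_Icc⟩
    · exact ((hf s ⟨hs.1, hs.2.le⟩).mono_of_mem_nhdsWithin (hmemIcc s hs)).mono Ioi_subset_Ici_self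
  have hUcont : ContinuousOn U (Set.Icc 0 t) := by
    have := intervalIntegral.continuousOn_primitive_interval' (hui t ⟨ht.le, le_refl t⟩) left_mem_uIcc
    rwa [uIcc_of_le ht.le] at this
  have hUderiv : ∀ s ∈ Set.Ico 0 t, HasDerivWithinAt U (u s) (Set.Ici s) s :=
    hFTC u hucont hui
  have hbound1 : ∀ s ∈ Set.Ico 0 t, ‖u s‖ ≤ K * ‖U s‖ + ε * t := by
    intro s hs
    rw [Real.norm_eq_abs, Real.norm_eq_abs, abs_of_nonneg (hpos s hs.1),
      abs_of_nonneg (hUnonneg s ⟨hs.1, hs.2.le⟩)]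
    exact hub s ⟨hs.1, hs.2.le⟩
  have hgron1 := norm_le_gronwallBound_of_norm_deriv_right_le (f := U) (f' := u)
    (δ := 0) (K := K) (ε := ε * t) (a := 0) (b := t) hUcont hUderiv
    (by simp [hUdef]) hbound1
  have hubound : ∀ s ∈ Set.Icc 0 t, u s ≤ ε * (t * Real.exp (K * t)) := by
    intro s hs
    have hU := hgron1 s hs
    rw [Real.norm_eq_abs, abs_of_nonneg (hUnonneg s hs), sub_zero,
      gronwallBound_of_K_ne_0 hK0.ne'] at hU
    have hexp : Real.exp (K * s) ≤ Real.exp (K * t) :=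
      Real.exp_le_exp.2 (by nlinarith [hs.2, hK0.le])
    have h5 := hub s hs
    have h6 : K * U s ≤ ε * t * (Real.exp (K * s) - 1) := by
      have := mul_le_mul_of_nonneg_left hU hK0.le
      calc K * U s ≤ K * (0 * Real.exp (K * s) + ε * t / K * (Real.exp (K * s) - 1)) := this
        _ = ε * t * (Real.exp (K * s) - 1) := by field_simp; ring
    have h8 : ε * t * Real.exp (K * s) ≤ ε * t * Real.exp (K * t) :=
      mul_le_mul_of_nonneg_left hexp (by positivity)
    linarith
  set Λ : ℝ := ε * (t * Real.exp (K * t)) with hLdef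
  have hΛ0 : 0 < Λ := by positivity
  set J : ℝ := ∫ θ, (Real.exp (-Λ * θ) - 1 + Λ * θ) ∂π with hJdef
  set Θ : ℝ := ∫ θ in Set.Ioi r, θ ∂π with hTdef
  set ρ : ℝ := β * Λ ^ 2 + J + Λ * Θ with hpdef
  have hΘ0 : 0 ≤ Θ := tail_nonneg hr
  have hJ0 : 0 ≤ J := Jint_nonneg (π := π) Λ
  have hρ0 : 0 ≤ ρ := by
    have h1 : (0:ℝ) ≤ β * Λ ^ 2 := by positivity
    have h2 : (0:ℝ) ≤ Λ * Θ := mul_nonneg hΛ0.le hΘ0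
    rw [hpdef]; linarith
  have hhub : ∀ s ∈ Set.Icc 0 t, h s ≤ ρ := by
    intro s hs
    have hu0 : 0 ≤ u s := hpos s hs.1
    have huΛ : u s ≤ Λ := hubound s hs
    have b1 : β * (u s) ^ 2 ≤ β * Λ ^ 2 := mul_le_mul_of_nonneg_left (pow_le_pow_left₀ hu0 huΛ 2) hβ
    have b2 : (∫ θ, (Real.exp (-(u s) * θ) - 1 + (u s) * θ) ∂π) ≤ J :=
      Jint_mono hsupp hint hu0 huΛ
    have b3 : (∫ θ in Set.Ioi r, (1 - Real.exp (-(u s) * θ)) ∂π) ≤ Λ * Θ := by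
      have i1 : IntegrableOn (fun θ => 1 - Real.exp (-(u s) * θ)) (Set.Ioi r) π := by
        have hKint : IntegrableOn (fun _ : ℝ => (1:ℝ)) (Set.Ioi r) π :=
          integrableOn_const hfin
        refine hKint.mono' (Continuous.aestronglyMeasurable (by fun_prop)) ?_
        rw [ae_restrict_iff' measurableSet_Ioi]
        refine Eventually.of_forall fun θ (hθ : r < θ) => ?_
        have hx : 0 ≤ u s * θ := mul_nonneg hu0 (le_trans hr.le hθ.le)
        rw [Real.norm_eq_abs, neg_mul, abs_of_nonneg (oneSubExp_nonneg hx)]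
        have := Real.exp_pos (-(u s * θ))
        linarith
      have i2 : IntegrableOn (fun θ => u s * θ) (Set.Ioi r) π :=
        (integrableOn_id_tail hsupp hint hr).const_mul (u s)
      have step1 : (∫ θ in Set.Ioi r, (1 - Real.exp (-(u s) * θ)) ∂π)
          ≤ ∫ θ in Set.Ioi r, u s * θ ∂π := by
        apply setIntegral_mono_on i1 i2 measurableSet_Ioi
        intro θ _
        rw [neg_mul]
        exact oneSubExp_le
      have step2 : (∫ θ in Set.Ioi r, u s * θ ∂π) = u s * Θ := by
        rw [hTdef, ← integral_const_mul]
      have step3 : u s * Θ ≤ Λ * Θ := mul_le_mul_of_nonneg_right huΛ hΘ0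
      linarith
    have hformula : h s = β * (u s) ^ 2
        + (∫ θ, (Real.exp (-(u s) * θ) - 1 + (u s) * θ) ∂π)
        + ∫ θ in Set.Ioi r, (1 - Real.exp (-(u s) * θ)) ∂π := by
      simp only [hhdef, hgdef]
      unfold PhiIoi Phi
      ring
    rw [hformula, hpdef]
    linarith
  set w : ℝ → ℝ := fun s => ∫ τ in (0:ℝ)..s, Real.exp (-α * τ) with hwdef
  have hwcont : Continuous (fun τ : ℝ => Real.exp (-α * τ)) := by fun_prop
  have hwderiv : ∀ s : ℝ, HasDerivAt w (Real.exp (-α * s)) s := by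
    intro s
    exact intervalIntegral.integral_hasDerivAt_right (hwcont.intervalIntegrable 0 s)
      (hwcont.stronglyMeasurableAtFilter _ _) hwcont.continuousAt
  have hwid : ∀ s : ℝ, α * w s = 1 - Real.exp (-α * s) := by
    intro s
    rcases eq_or_ne α 0 with h0 | h0
    · simp [h0]
    · have hF : ∀ τ ∈ Set.uIcc (0:ℝ) s,
          HasDerivAt (fun τ => -(1/α) * Real.exp (-α * τ)) (Real.exp (-α * τ)) τ := by
        intro τ _
        have h1 : HasDerivAt (fun τ : ℝ => -α * τ) (-α) τ := by
          simpa using (hasDerivAt_id τ).const_mul (-α)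
        have h2 := (Real.hasDerivAt_exp (-α * τ)).comp τ h1
        have h3 := h2.const_mul (-(1/α))
        refine h3.congr_deriv ?_
        field_simp
      have hkey := intervalIntegral.integral_eq_sub_of_hasDerivAt hF
        (hwcont.intervalIntegrable 0 s)
      rw [hwdef]
      simp only
      rw [hkey]
      field_simp
      simp only [mul_zero, neg_zero, Real.exp_zero]; ring
  have hw0 : w 0 = 0 := intervalIntegral.integral_same
  have hwc : Continuous w := by
    rw [continuous_iff_continuousAt]
    intro s
    exact (hwderiv s).continuousAt
  set d : ℝ → ℝ := fun s => u s - ε * w s with hddef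
  have hdcont : ContinuousOn d (Set.Icc 0 t) :=
    hucont.sub ((continuous_const.mul hwc).continuousOn)
  have hu00 : u 0 = 0 := by
    have := heq 0 le_rfl
    simpa using this
  have hd0 : d 0 = 0 := by simp [hddef, hu00, hw0]
  have huderiv : ∀ s ∈ Set.Ico 0 t, HasDerivWithinAt u (ε - g s) (Set.Ici s) s := by
    intro s hs
    have hprim := hFTC g hgcont hgi s hs
    have hlin : HasDerivWithinAt (fun x : ℝ => ε * x) ε (Set.Ici s) s := by
      simpa using ((hasDerivAt_id s).const_mul ε).hasDerivWithinAt
    have hsub := hlin.sub hprim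
    apply hsub.congr
    · intro y hy
      exact heq y (le_trans hs.1 hy)
    · exact heq s hs.1
  have hdderiv : ∀ s ∈ Set.Ico 0 t, HasDerivWithinAt d (-α * d s - h s) (Set.Ici s) s := by
    intro s hs
    have h1 := (huderiv s hs).sub (((hwderiv s).const_mul ε).hasDerivWithinAt)
    refine h1.congr_deriv ?_
    rw [show Real.exp (-α * s) = 1 - α * w s from by linarith [hwid s]]
    simp only [hddef, hhdef, hgdef]
    ring
  have hbound2 : ∀ s ∈ Set.Ico 0 t, ‖-α * d s - h s‖ ≤ K * ‖d s‖ + ρ := by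
    intro s hs
    rw [Real.norm_eq_abs, Real.norm_eq_abs]
    have h1 : |(-α) * d s - h s| ≤ |(-α) * d s| + |h s| := abs_sub _ _
    rw [abs_mul, abs_neg] at h1
    have h2 : |h s| = h s := abs_of_nonneg (hh_nonneg s ⟨hs.1, hs.2.le⟩)
    have h3 : h s ≤ ρ := hhub s ⟨hs.1, hs.2.le⟩
    have h4 : |α| * |d s| ≤ K * |d s| := mul_le_mul_of_nonneg_right hKabs (abs_nonneg _)
    linarith
  have hgron2 := norm_le_gronwallBound_of_norm_deriv_right_le (f := d)
    (f' := fun s => -α * d s - h s) (δ := 0) (K := K) (ε := ρ) (a := 0) (b := t)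
    hdcont hdderiv (by simp [hd0]) hbound2
  have hfin2 := hgron2 t ⟨ht.le, le_refl t⟩
  rw [Real.norm_eq_abs, sub_zero, gronwallBound_of_K_ne_0 hK0.ne'] at hfin2
  refine ⟨hubound t ⟨ht.le, le_refl t⟩, ?_⟩
  have hbb : (0:ℝ) * Real.exp (K * t) + ρ / K * (Real.exp (K * t) - 1)
      ≤ ρ * Real.exp (K * t) := by
    have h1 : ρ / K ≤ ρ := div_le_self hρ0 hK1
    have h2 : 0 < Real.exp (K * t) := Real.exp_pos _
    have h3 : 0 ≤ ρ / K := div_nonneg hρ0 hK0.le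
    nlinarith
  exact le_trans hfin2 hbb

/-- Analytic form of Theorem 3.3: the tail of the local maximal jump is
asymptotically `x (1 - e^{-αt})/α · π((r,∞))` as `r → ∞`. -/
theorem local_maximal_jump_tail_asymptotics
    (α β : ℝ) (hβ : 0 ≤ β) (π : Measure ℝ)
    (hsupp : π (Set.Iic 0) = 0) (hσ : SigmaFinite π)
    (hint : Integrable (fun θ => min θ (θ ^ 2)) π)
    (hunbdd : ∀ r : ℝ, 0 < r → 0 < (π (Set.Ioi r)).toReal)
    (u : ℝ → ℝ → ℝ)
    (hu : ∀ r : ℝ, 0 < r →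
      IsMassSolution (PhiIoi α β π r) ((π (Set.Ioi r)).toReal) (u r)) :
    (∀ t : ℝ, 0 < t → ∀ x : ℝ, 0 < x →
      Tendsto
        (fun r => (1 - Real.exp (-x * u r t)) / (π (Set.Ioi r)).toReal)
        atTop (nhds (x * ∫ s in (0:ℝ)..t, Real.exp (-α * s)))) ∧
    (∀ t : ℝ, 0 < t →
      Tendsto (fun r => u r t / (π (Set.Ioi r)).toReal)
        atTop (nhds (∫ s in (0:ℝ)..t, Real.exp (-α * s)))) := by
  have hfin : ∀ r : ℝ, 0 < r → π (Set.Ioi r) ≠ ⊤ := by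
    intro r hr htop
    have h1 := hunbdd r hr
    rw [htop] at h1
    simp at h1
  have hεt : Tendsto (fun r => (π (Set.Ioi r)).toReal) atTop (𝓝 0) := eps_tendsto hsupp hint
  have part2 : ∀ t : ℝ, 0 < t →
      Tendsto (fun r => u r t / (π (Set.Ioi r)).toReal)
        atTop (𝓝 (∫ s in (0:ℝ)..t, Real.exp (-α * s))) := by
    intro t ht
    set C : ℝ := t * Real.exp ((|α| + 1) * t) with hC
    have hC0 : 0 < C := by positivity
    set E : ℝ := Real.exp ((|α| + 1) * t) with hE
    have hE0 : 0 < E := Real.exp_pos _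
    set b : ℝ → ℝ := fun r =>
      (β * ((π (Set.Ioi r)).toReal * C) * C
        + (∫ θ, (Real.exp (-((π (Set.Ioi r)).toReal * C) * θ) - 1
            + ((π (Set.Ioi r)).toReal * C) * θ) ∂π) / ((π (Set.Ioi r)).toReal * C) * C
        + C * ∫ θ in Set.Ioi r, θ ∂π) * E with hb
    have hcore : ∀ r : ℝ, 0 < r →
        |u r t / (π (Set.Ioi r)).toReal - ∫ s in (0:ℝ)..t, Real.exp (-α * s)| ≤ b r := by
      intro r hr
      have hεr : 0 < (π (Set.Ioi r)).toReal := hunbdd r hr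
      obtain ⟨h1, h2⟩ := core_estimate α β hβ hsupp hint hr (hfin r hr) hεr (hu r hr) ht
      rw [← hC] at h2
      rw [← hE] at h2
      have e1 : u r t / (π (Set.Ioi r)).toReal - (∫ s in (0:ℝ)..t, Real.exp (-α * s))
          = (u r t - (π (Set.Ioi r)).toReal * ∫ s in (0:ℝ)..t, Real.exp (-α * s))
            / (π (Set.Ioi r)).toReal := by
        field_simp
      rw [e1, abs_div, abs_of_pos hεr]
      have e2 : |u r t - (π (Set.Ioi r)).toReal * ∫ s in (0:ℝ)..t, Real.exp (-α * s)|
            / (π (Set.Ioi r)).toReal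
          ≤ ((β * ((π (Set.Ioi r)).toReal * C) ^ 2
            + (∫ θ, (Real.exp (-((π (Set.Ioi r)).toReal * C) * θ) - 1
                + ((π (Set.Ioi r)).toReal * C) * θ) ∂π)
            + ((π (Set.Ioi r)).toReal * C) * ∫ θ in Set.Ioi r, θ ∂π) * E)
            / (π (Set.Ioi r)).toReal := by
        gcongr
      refine le_trans e2 (le_of_eq ?_)
      rw [hb]
      field_simp
    have hbt : Tendsto b atTop (𝓝 0) := by
      have tΛ : Tendsto (fun r => (π (Set.Ioi r)).toReal * C) atTop (𝓝 0) := by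
        have := hεt.mul_const C
        simpa using this
      have tΛ' : Tendsto (fun r => (π (Set.Ioi r)).toReal * C) atTop (𝓝[>] (0:ℝ)) := by
        rw [tendsto_nhdsWithin_iff]
        refine ⟨tΛ, ?_⟩
        filter_upwards [eventually_gt_atTop (0:ℝ)] with r hr
        exact mul_pos (hunbdd r hr) hC0
      have tJ : Tendsto (fun r =>
          (∫ θ, (Real.exp (-((π (Set.Ioi r)).toReal * C) * θ) - 1
            + ((π (Set.Ioi r)).toReal * C) * θ) ∂π) / ((π (Set.Ioi r)).toReal * C))
          atTop (𝓝 0) := (Jdiv_tendsto hsupp hint).comp tΛ'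
      have tΘ : Tendsto (fun r => ∫ θ in Set.Ioi r, θ ∂π) atTop (𝓝 0) :=
        tail_tendsto hsupp hint
      have main := (((tendsto_const_nhds (x := β)).mul tΛ).mul_const C |>.add
        (tJ.mul_const C) |>.add ((tendsto_const_nhds (x := C)).mul tΘ)).mul_const E
      rw [hb]
      simpa using main
    rw [tendsto_iff_dist_tendsto_zero]
    apply squeeze_zero' (Eventually.of_forall fun r => dist_nonneg) _ hbt
    filter_upwards [eventually_gt_atTop (0:ℝ)] with r hr
    rw [Real.dist_eq]
    exact hcore r hr
  refine ⟨?_, part2⟩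
  intro t ht x hx
  have base : Tendsto (fun r => x * (u r t / (π (Set.Ioi r)).toReal)) atTop
      (𝓝 (x * ∫ s in (0:ℝ)..t, Real.exp (-α * s))) := (part2 t ht).const_mul x
  set C : ℝ := t * Real.exp ((|α| + 1) * t) with hC
  have hC0 : 0 < C := by positivity
  set err : ℝ → ℝ := fun r =>
    (1 - Real.exp (-x * u r t)) / (π (Set.Ioi r)).toReal
      - x * (u r t / (π (Set.Ioi r)).toReal) with herrdef
  have herr : Tendsto err atTop (𝓝 0) := by
    rw [tendsto_zero_iff_abs_tendsto_zero]
    apply squeeze_zero' (Eventually.of_forall fun r => abs_nonneg _) _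
      (by simpa using hεt.const_mul (x ^ 2 * C ^ 2 / 2))
    filter_upwards [eventually_gt_atTop (0:ℝ)] with r hr
    have hεr : 0 < (π (Set.Ioi r)).toReal := hunbdd r hr
    have hu0 : 0 ≤ u r t := (hu r hr).1 t ht.le
    have hu1 : u r t ≤ (π (Set.Ioi r)).toReal * C := by
      have := (core_estimate α β hβ hsupp hint hr (hfin r hr) hεr (hu r hr) ht).1
      rwa [← hC] at this
    have hy0 : 0 ≤ x * u r t := mul_nonneg hx.le hu0
    have e1 : err r = (1 - Real.exp (-(x * u r t)) - x * u r t) / (π (Set.Ioi r)).toReal := by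
      rw [herrdef]
      simp only [neg_mul]
      field_simp
    rw [e1, abs_div, abs_of_pos hεr]
    have e2 : |1 - Real.exp (-(x * u r t)) - x * u r t|
        = Real.exp (-(x * u r t)) - 1 + x * u r t := by
      rw [show (1 : ℝ) - Real.exp (-(x * u r t)) - x * u r t
          = -(Real.exp (-(x * u r t)) - 1 + x * u r t) from by ring, abs_neg]
      exact abs_of_nonneg (by
        have := Real.add_one_le_exp (-(x * u r t)); linarith)
    rw [e2]
    have e3 : Real.exp (-(x * u r t)) - 1 + x * u r t ≤ (x * u r t) ^ 2 / 2 := expQuad hy0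
    have e4 : (x * u r t) ^ 2 / 2 ≤ x ^ 2 * C ^ 2 / 2 * ((π (Set.Ioi r)).toReal) ^ 2 := by
      have h5 : x * u r t ≤ x * ((π (Set.Ioi r)).toReal * C) :=
        mul_le_mul_of_nonneg_left hu1 hx.le
      nlinarith [hy0]
    rw [div_le_iff₀ hεr]
    calc Real.exp (-(x * u r t)) - 1 + x * u r t ≤ (x * u r t) ^ 2 / 2 := e3
      _ ≤ x ^ 2 * C ^ 2 / 2 * ((π (Set.Ioi r)).toReal) ^ 2 := e4
      _ ≤ x ^ 2 * C ^ 2 / 2 * (π (Set.Ioi r)).toReal * (π (Set.Ioi r)).toReal := by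
          rw [pow_two]; ring_nf; exact le_refl _
  have final := base.add herr
  rw [add_zero] at final
  apply final.congr
  intro r
  rw [herrdef]
  ring
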